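/- Let f : ℝ^d → ℝ be twice continuously differentiable with λmin·I ⪯ ∇²f(x) ⪯ λmax·I for all x and L-Lipschitz Hessian, with unique minimizer x*. Define N_ν = {x : ‖x - x*‖_{H*} ≤ ν·λmin^{3/2}/L} and N̄_ν = {x : f(x) ≤ f(x*) + ν·λmin³/L²}. Then for every ν ∈ (0,1], the inclusions N̄_{ν²/3} ⊆ N_ν ⊆ N̄_{ν²} hold. -/

import Mathlib

open Real
open scoped BigOperators Matrix

/-- Spectral norm (ℓ₂ operator norm) of a real matrix. -/
noncomputable def specNorm {d : ℕ} (A : Matrix (Fin d) (Fin d) ℝ) : ℝ :=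
  ‖Matrix.toEuclideanCLM (𝕜 := ℝ) A‖

/-- Euclidean (ℓ₂) norm of a vector. -/
noncomputable def vnorm {d : ℕ} (v : Fin d → ℝ) : ℝ := Real.sqrt (∑ i, v i ^ 2)

/-- The norm ‖v‖_A = √(vᵀAv) induced by a positive semidefinite matrix A. -/
noncomputable def Mnorm {d : ℕ} (A : Matrix (Fin d) (Fin d) ℝ) (v : Fin d → ℝ) : ℝ :=
  Real.sqrt (dotProduct v (A.mulVec v))

lemma vnorm_nonneg {d : ℕ} (v : Fin d → ℝ) : 0 ≤ vnorm v := Real.sqrt_nonneg _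

lemma vnorm_sq {d : ℕ} (v : Fin d → ℝ) : vnorm v ^ 2 = ∑ i, v i ^ 2 := by
  rw [vnorm, Real.sq_sqrt]
  exact Finset.sum_nonneg fun i _ => sq_nonneg _

lemma vnorm_smul {d : ℕ} (t : ℝ) (v : Fin d → ℝ) : vnorm (t • v) = |t| * vnorm v := by
  simp only [vnorm, Pi.smul_apply, smul_eq_mul, mul_pow, ← Finset.mul_sum]
  rw [Real.sqrt_mul (sq_nonneg t), Real.sqrt_sq_eq_abs]

lemma vnorm_eq_norm {d : ℕ} (w : Fin d → ℝ) :
    vnorm w = ‖(WithLp.equiv 2 (Fin d → ℝ)).symm w‖ := by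
  rw [EuclideanSpace.norm_eq, vnorm]
  congr 1
  refine Finset.sum_congr rfl fun i _ => ?_
  simp [Real.norm_eq_abs, sq_abs]

lemma quad_abs {d : ℕ} (A : Matrix (Fin d) (Fin d) ℝ) (w : Fin d → ℝ) :
    |dotProduct w (A.mulVec w)| ≤ specNorm A * vnorm w ^ 2 := by
  set w' : EuclideanSpace ℝ (Fin d) := (WithLp.equiv 2 (Fin d → ℝ)).symm w with hw'
  have h1 : (inner ℝ w' ((Matrix.toEuclideanCLM (𝕜 := ℝ) A) w') : ℝ)
      = dotProduct w (A.mulVec w) := by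
    rw [EuclideanSpace.inner_eq_star_dotProduct, Matrix.ofLp_toEuclideanCLM]
    simp [hw', Matrix.toLin'_apply]; exact dotProduct_comm _ _
  rw [← h1]
  calc |(inner ℝ w' ((Matrix.toEuclideanCLM (𝕜 := ℝ) A) w') : ℝ)|
      ≤ ‖w'‖ * ‖(Matrix.toEuclideanCLM (𝕜 := ℝ) A) w'‖ := abs_real_inner_le_norm _ _
    _ ≤ ‖w'‖ * (‖Matrix.toEuclideanCLM (𝕜 := ℝ) A‖ * ‖w'‖) := by
        gcongr; exact ContinuousLinearMap.le_opNorm _ _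
    _ = specNorm A * vnorm w ^ 2 := by rw [specNorm, vnorm_eq_norm]; ring

lemma quad_lower {d : ℕ} {Hy : Matrix (Fin d) (Fin d) ℝ} {lmin : ℝ}
    (h : (Hy - lmin • (1 : Matrix (Fin d) (Fin d) ℝ)).PosSemidef) (w : Fin d → ℝ) :
    lmin * vnorm w ^ 2 ≤ dotProduct w (Hy.mulVec w) := by
  have := h.dotProduct_mulVec_nonneg w
  simp only [star_trivial, Matrix.sub_mulVec, dotProduct_sub,
    Matrix.smul_mulVec, Matrix.one_mulVec, dotProduct_smul,
    smul_eq_mul, sub_nonneg] at this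
  have hd : dotProduct w w = vnorm w ^ 2 := by
    rw [vnorm_sq, dotProduct]
    exact Finset.sum_congr rfl fun i _ => (sq (w i)).symm ▸ (pow_two (w i)).symm ▸ rfl
  rw [hd] at this
  linarith [this]

lemma mono01 (F F' : ℝ → ℝ) (hd : ∀ t ∈ Set.Icc (0:ℝ) 1, HasDerivAt F (F' t) t)
    (h0 : ∀ t ∈ Set.Icc (0:ℝ) 1, 0 ≤ F' t) : ∀ t ∈ Set.Icc (0:ℝ) 1, F 0 ≤ F t := by
  intro t ht
  have hmono : MonotoneOn F (Set.Icc 0 1) := by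
    apply monotoneOn_of_deriv_nonneg (convex_Icc 0 1)
    · exact fun s hs => (hd s hs).continuousAt.continuousWithinAt
    · intro s hs
      rw [interior_Icc] at hs
      exact (hd s (Set.mem_Icc_of_Ioo hs)).differentiableAt.differentiableWithinAt
    · intro s hs
      rw [interior_Icc] at hs
      rw [(hd s (Set.mem_Icc_of_Ioo hs)).deriv]
      exact h0 s (Set.mem_Icc_of_Ioo hs)
  exact hmono (Set.left_mem_Icc.mpr zero_le_one) ht ht.1

lemma taylorCore {d : ℕ} (f : (Fin d → ℝ) → ℝ) (g : (Fin d → ℝ) → Fin d → ℝ)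
    (H : (Fin d → ℝ) → Matrix (Fin d) (Fin d) ℝ) (lmin L : ℝ)
    (hf : ContDiff ℝ 2 f)
    (hgrad : ∀ y v, fderiv ℝ f y v = dotProduct (g y) v)
    (hhess : ∀ y u v, fderiv ℝ (fun z => fderiv ℝ f z v) y u =
      dotProduct u ((H y).mulVec v))
    (hlow : ∀ y, (H y - lmin • (1 : Matrix (Fin d) (Fin d) ℝ)).PosSemidef)
    (hLip : ∀ y z, specNorm (H y - H z) ≤ L * vnorm (y - z))
    (xstar : Fin d → ℝ) (hg0 : fderiv ℝ f xstar = 0) (x : Fin d → ℝ) :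
    lmin * vnorm (x - xstar) ^ 2 / 2 ≤ f x - f xstar ∧
    |f x - f xstar - dotProduct (x - xstar) ((H xstar).mulVec (x - xstar)) / 2|
      ≤ L * vnorm (x - xstar) ^ 3 / 6 := by
  set v : Fin d → ℝ := x - xstar with hv
  set a : ℝ := vnorm v with hadef
  have ha : 0 ≤ a := vnorm_nonneg v
  set c : ℝ → (Fin d → ℝ) := fun t => xstar + t • v with hcdef
  have hc0 : c 0 = xstar := by simp [hcdef]
  have hc1 : c 1 = x := by simp [hcdef, hv]
  have hcd : ∀ t : ℝ, HasDerivAt c v t := by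
    intro t
    have h1 : HasDerivAt (fun s : ℝ => s • v) v t := by
      simpa using (hasDerivAt_id t).smul_const v
    simpa [hcdef] using h1.const_add xstar
  -- first derivative of φ
  have hφ : ∀ t : ℝ, HasDerivAt (fun s => f (c s)) (dotProduct (g (c t)) v) t := by
    intro t
    have hdf : DifferentiableAt ℝ f (c t) := (hf.differentiable (by norm_num)).differentiableAt
    have h2 := hdf.hasFDerivAt.comp_hasDerivAt t (hcd t)
    rw [hgrad] at h2
    exact h2
  -- φ'(0) = 0
  have hφ'0 : dotProduct (g (c 0)) v = 0 := by
    rw [hc0, ← hgrad, hg0]; simp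
  -- second derivative
  have hG : ContDiff ℝ 1 (fun z => fderiv ℝ f z v) :=
    (hf.fderiv_right (by norm_num)).clm_apply contDiff_const
  have hφ' : ∀ t : ℝ, HasDerivAt (fun s => dotProduct (g (c s)) v)
      (dotProduct v ((H (c t)).mulVec v)) t := by
    intro t
    have hdG : DifferentiableAt ℝ (fun z => fderiv ℝ f z v) (c t) :=
      (hG.differentiable one_ne_zero).differentiableAt
    have h2 := hdG.hasFDerivAt.comp_hasDerivAt t (hcd t)
    rw [hhess] at h2
    have hfun : (fun s => fderiv ℝ f (c s) v) = fun s => dotProduct (g (c s)) v :=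
      funext fun s => hgrad _ _
    rw [← hfun]
    exact h2
  -- quadratic bounds
  have hlowq : ∀ t : ℝ, lmin * a ^ 2 ≤ dotProduct v ((H (c t)).mulVec v) :=
    fun t => quad_lower (hlow (c t)) v
  have hdiffq : ∀ t ∈ Set.Icc (0:ℝ) 1,
      |dotProduct v ((H (c t)).mulVec v)
        - dotProduct v ((H xstar).mulVec v)| ≤ L * t * a ^ 3 := by
    intro t ht
    have h1 : dotProduct v ((H (c t)).mulVec v)
        - dotProduct v ((H xstar).mulVec v)
        = dotProduct v ((H (c t) - H xstar).mulVec v) := by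
      rw [Matrix.sub_mulVec, dotProduct_sub]
    rw [h1]
    calc |dotProduct v ((H (c t) - H xstar).mulVec v)|
        ≤ specNorm (H (c t) - H xstar) * vnorm v ^ 2 := quad_abs _ _
      _ ≤ (L * vnorm (c t - xstar)) * vnorm v ^ 2 :=
          mul_le_mul_of_nonneg_right (hLip _ _) (sq_nonneg _)
      _ = L * t * a ^ 3 := by
          have : c t - xstar = t • v := by simp [hcdef]
          rw [this, vnorm_smul, abs_of_nonneg ht.1, ← hadef]
          ring
  set Q : ℝ := dotProduct v ((H xstar).mulVec v) with hQdef
  -- Part 1 : strong convexity lower bound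
  have part1 : lmin * a ^ 2 / 2 ≤ f x - f xstar := by
    have step1 : ∀ t ∈ Set.Icc (0:ℝ) 1,
        0 ≤ dotProduct (g (c t)) v - lmin * a ^ 2 * t := by
      have := mono01 (fun t => dotProduct (g (c t)) v - lmin * a ^ 2 * t)
        (fun t => dotProduct v ((H (c t)).mulVec v) - lmin * a ^ 2)
        (fun t _ => by
          have h3 : HasDerivAt (fun s : ℝ => lmin * a ^ 2 * s) (lmin * a ^ 2) t := by
            simpa using (hasDerivAt_id t).const_mul (lmin * a ^ 2)
          exact (hφ' t).sub h3)
        (fun t _ => by linarith [hlowq t])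
      intro t ht
      have h4 := this t ht
      simp only [mul_zero, sub_zero] at h4
      linarith [h4, hφ'0]
    have step2 := mono01 (fun t => f (c t) - lmin * a ^ 2 * t ^ 2 / 2)
      (fun t => dotProduct (g (c t)) v - lmin * a ^ 2 * t)
      (fun t _ => by
        have h3 : HasDerivAt (fun s : ℝ => lmin * a ^ 2 * s ^ 2 / 2) (lmin * a ^ 2 * t) t := by
          have := ((hasDerivAt_pow 2 t).const_mul (lmin * a ^ 2)).div_const 2
          simpa using this.congr_deriv (by ring)
        exact (hφ t).sub h3)
      step1 1 (Set.right_mem_Icc.mpr zero_le_one)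
    simp only [hc0, hc1] at step2
    nlinarith [step2]
  -- Part 2 : Taylor bound w.r.t. H*
  have chibnd : ∀ t ∈ Set.Icc (0:ℝ) 1,
      |dotProduct (g (c t)) v - Q * t| ≤ L * a ^ 3 * t ^ 2 / 2 := by
    have hdU : ∀ s : ℝ, HasDerivAt (fun t => dotProduct (g (c t)) v - Q * t)
        (dotProduct v ((H (c s)).mulVec v) - Q) s := by
      intro s
      have h3 : HasDerivAt (fun t : ℝ => Q * t) Q s := by
        simpa using (hasDerivAt_id s).const_mul Q
      exact (hφ' s).sub h3
    have hdq : ∀ s : ℝ, HasDerivAt (fun t : ℝ => L * a ^ 3 * t ^ 2 / 2) (L * a ^ 3 * s) s := by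
      intro s
      have := ((hasDerivAt_pow 2 s).const_mul (L * a ^ 3)).div_const 2
      simpa using this.congr_deriv (by ring)
    intro t ht
    have hub := mono01 (fun t => L * a ^ 3 * t ^ 2 / 2 - (dotProduct (g (c t)) v - Q * t))
      (fun t => L * a ^ 3 * t - (dotProduct v ((H (c t)).mulVec v) - Q))
      (fun s hs => ((hdq s).sub (hdU s)))
      (fun s hs => by
        have := hdiffq s hs
        rw [abs_le] at this
        linarith [this.2]) t ht
    have hlb := mono01 (fun t => L * a ^ 3 * t ^ 2 / 2 + (dotProduct (g (c t)) v - Q * t))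
      (fun t => L * a ^ 3 * t + (dotProduct v ((H (c t)).mulVec v) - Q))
      (fun s hs => ((hdq s).add (hdU s)))
      (fun s hs => by
        have := hdiffq s hs
        rw [abs_le] at this
        linarith [this.1]) t ht
    have h0ub : L * a ^ 3 * (0:ℝ) ^ 2 / 2 - (dotProduct (g (c 0)) v - Q * 0) = 0 := by
      rw [hφ'0]; ring
    have h0lb : L * a ^ 3 * (0:ℝ) ^ 2 / 2 + (dotProduct (g (c 0)) v - Q * 0) = 0 := by
      rw [hφ'0]; ring
    rw [h0ub] at hub
    rw [h0lb] at hlb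
    rw [abs_le]
    constructor
    · linarith [hlb]
    · linarith [hub]
  have part2 : |f x - f xstar - Q / 2| ≤ L * a ^ 3 / 6 := by
    have hdχ : ∀ s : ℝ, HasDerivAt (fun t => f (c t) - Q * t ^ 2 / 2)
        (dotProduct (g (c s)) v - Q * s) s := by
      intro s
      have h3 : HasDerivAt (fun t : ℝ => Q * t ^ 2 / 2) (Q * s) s := by
        have := ((hasDerivAt_pow 2 s).const_mul Q).div_const 2
        exact this.congr_deriv (by ring)
      exact (hφ s).sub h3
    have hdq3 : ∀ s : ℝ, HasDerivAt (fun t : ℝ => L * a ^ 3 * t ^ 3 / 6)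
        (L * a ^ 3 * s ^ 2 / 2) s := by
      intro s
      have := ((hasDerivAt_pow 3 s).const_mul (L * a ^ 3)).div_const 6
      exact this.congr_deriv (by push_cast; ring)
    have hub := mono01 (fun t => L * a ^ 3 * t ^ 3 / 6 - (f (c t) - Q * t ^ 2 / 2))
      (fun t => L * a ^ 3 * t ^ 2 / 2 - (dotProduct (g (c t)) v - Q * t))
      (fun s _ => (hdq3 s).sub (hdχ s))
      (fun s hs => by
        have := chibnd s hs
        rw [abs_le] at this
        linarith [this.2]) 1 (Set.right_mem_Icc.mpr zero_le_one)
    have hlb := mono01 (fun t => L * a ^ 3 * t ^ 3 / 6 + (f (c t) - Q * t ^ 2 / 2))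
      (fun t => L * a ^ 3 * t ^ 2 / 2 + (dotProduct (g (c t)) v - Q * t))
      (fun s _ => (hdq3 s).add (hdχ s))
      (fun s hs => by
        have := chibnd s hs
        rw [abs_le] at this
        linarith [this.1]) 1 (Set.right_mem_Icc.mpr zero_le_one)
    simp only [hc0, hc1] at hub hlb
    rw [abs_le]
    constructor
    · nlinarith [hlb]
    · nlinarith [hub]
  exact ⟨part1, part2⟩


set_option maxHeartbeats 2000000 in
/-- Lemma B.1 in the paper: the sandwich
`N̄_{ν²/3} ⊆ N_ν ⊆ N̄_{ν²}` between the iterate-neighborhood and the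
function-value neighborhood of the optimum. -/
theorem stmt18
    {d : ℕ} (f : (Fin d → ℝ) → ℝ) (g : (Fin d → ℝ) → Fin d → ℝ)
    (H : (Fin d → ℝ) → Matrix (Fin d) (Fin d) ℝ)
    (lmin lmax L : ℝ) (hlmin : 0 < lmin) (hlle : lmin ≤ lmax) (hL : 0 < L)
    (hf : ContDiff ℝ 2 f)
    (hgrad : ∀ y v, fderiv ℝ f y v = dotProduct (g y) v)
    (hhess : ∀ y u v, fderiv ℝ (fun z => fderiv ℝ f z v) y u =
      dotProduct u ((H y).mulVec v))
    (hHsym : ∀ y, (H y).IsSymm)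
    (hlow : ∀ y, (H y - lmin • (1 : Matrix (Fin d) (Fin d) ℝ)).PosSemidef)
    (hup : ∀ y, (lmax • (1 : Matrix (Fin d) (Fin d) ℝ) - H y).PosSemidef)
    (hLip : ∀ y z, specNorm (H y - H z) ≤ L * vnorm (y - z))
    (xstar : Fin d → ℝ) (hmin : ∀ y, f xstar ≤ f y)
    (huniq : ∀ y, (∀ z, f y ≤ f z) → y = xstar)
    (ν : ℝ) (hν0 : 0 < ν) (hν1 : ν ≤ 1) :
    (∀ x : Fin d → ℝ, f x ≤ f xstar + (ν ^ 2 / 3) * lmin ^ 3 / L ^ 2 →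
      Mnorm (H xstar) (x - xstar) ≤ ν * lmin ^ ((3 : ℝ) / 2) / L) ∧
    (∀ x : Fin d → ℝ, Mnorm (H xstar) (x - xstar) ≤ ν * lmin ^ ((3 : ℝ) / 2) / L →
      f x ≤ f xstar + ν ^ 2 * lmin ^ 3 / L ^ 2) := by
  have hloc : IsLocalMin f xstar := Filter.Eventually.of_forall hmin
  have hg0 : fderiv ℝ f xstar = 0 := hloc.fderiv_eq_zero
  have key := taylorCore f g H lmin L hf hgrad hhess hlow hLip xstar hg0
  set R : ℝ := ν * lmin ^ ((3:ℝ)/2) / L with hRdef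
  set B : ℝ := ν * lmin / L with hBdef
  have hB0 : 0 ≤ B := by positivity
  have hR0 : 0 ≤ R := by positivity
  have hrp : (lmin ^ ((3:ℝ)/2)) ^ 2 = lmin ^ 3 := by
    rw [← Real.rpow_natCast (lmin ^ ((3:ℝ)/2)) 2, ← Real.rpow_mul hlmin.le,
      ← Real.rpow_natCast lmin 3]
    norm_num
  have hBsq : lmin * B ^ 2 = ν ^ 2 * lmin ^ 3 / L ^ 2 := by
    rw [hBdef]; field_simp
  have hR2 : R ^ 2 = lmin * B ^ 2 := by
    rw [hRdef, hBsq, div_pow, mul_pow, hrp]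
  have hLB : L * B = ν * lmin := by rw [hBdef]; field_simp
  clear_value R B
  constructor
  · intro x hx
    obtain ⟨K1, K2⟩ := key x
    set a : ℝ := vnorm (x - xstar) with hadef
    have ha : 0 ≤ a := vnorm_nonneg _
    set Q : ℝ := dotProduct (x - xstar) ((H xstar).mulVec (x - xstar)) with hQdef
    have hMn : Mnorm (H xstar) (x - xstar) = Real.sqrt Q := rfl
    have hQ3 : lmin * a ^ 2 ≤ Q := quad_lower (hlow xstar) _
    have hQ0 : 0 ≤ Q := le_trans (by positivity) hQ3
    clear_value a Q
    rw [abs_le] at K2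
    have hD : f x - f xstar ≤ lmin * B ^ 2 / 3 := by
      have he : lmin * B ^ 2 / 3 = ν ^ 2 / 3 * lmin ^ 3 / L ^ 2 := by
        rw [hBsq]; ring
      rw [he]; linarith [hx]
    have ha2 : a ^ 2 ≤ (2/3) * B ^ 2 := by
      have h1 : lmin * a ^ 2 ≤ lmin * ((2/3) * B ^ 2) := by linarith [K1, hD]
      exact le_of_mul_le_mul_left h1 hlmin
    have haB : a ≤ B := by nlinarith [ha2, sq_nonneg (a - B), sq_nonneg (a + B)]
    have hLa3 : L * a ^ 3 ≤ (2/3) * lmin * B ^ 2 := by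
      have h1 : a ^ 3 ≤ B * a ^ 2 := by nlinarith [mul_le_mul_of_nonneg_right haB (sq_nonneg a)]
      have h2 : L * (B * a ^ 2) ≤ L * (B * ((2/3) * B ^ 2)) := by
        have := mul_le_mul_of_nonneg_left ha2 (mul_nonneg hL.le hB0)
        nlinarith [this]
      have h3 : L * (B * ((2/3) * B ^ 2)) = (2/3) * (L * B) * B ^ 2 := by ring
      have h4 : (2/3) * (L * B) * B ^ 2 ≤ (2/3) * lmin * B ^ 2 := by
        rw [hLB]
        nlinarith [sq_nonneg B, hlmin.le, hν1, hν0.le]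
      nlinarith [mul_le_mul_of_nonneg_left h1 hL.le]
    have hQle : Q ≤ R ^ 2 := by
      rw [hR2]
      nlinarith [K2.1, hD, hLa3]
    rw [hMn]
    calc Real.sqrt Q ≤ Real.sqrt (R ^ 2) := Real.sqrt_le_sqrt hQle
      _ = R := Real.sqrt_sq hR0
  · intro x hx
    obtain ⟨K1, K2⟩ := key x
    set a : ℝ := vnorm (x - xstar) with hadef
    have ha : 0 ≤ a := vnorm_nonneg _
    set Q : ℝ := dotProduct (x - xstar) ((H xstar).mulVec (x - xstar)) with hQdef
    have hMn : Mnorm (H xstar) (x - xstar) = Real.sqrt Q := rfl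
    have hQ3 : lmin * a ^ 2 ≤ Q := quad_lower (hlow xstar) _
    have hQ0 : 0 ≤ Q := le_trans (by positivity) hQ3
    clear_value a Q
    rw [abs_le] at K2
    have hbQ : Q ≤ R ^ 2 := by
      have h1 : Real.sqrt Q ≤ R := hMn ▸ hx
      have h2 : Real.sqrt Q ^ 2 ≤ R ^ 2 := pow_le_pow_left₀ (Real.sqrt_nonneg _) h1 2
      rwa [Real.sq_sqrt hQ0] at h2
    rw [hR2] at hbQ
    have ha2 : a ^ 2 ≤ B ^ 2 := by
      have h1 : lmin * a ^ 2 ≤ lmin * B ^ 2 := le_trans hQ3 hbQ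
      exact le_of_mul_le_mul_left h1 hlmin
    have haB : a ≤ B := by nlinarith [ha2, sq_nonneg (a - B), sq_nonneg (a + B)]
    have hLa3 : L * a ^ 3 ≤ lmin * B ^ 2 := by
      have h1 : a ^ 3 ≤ B ^ 3 := pow_le_pow_left₀ ha haB 3
      have h2 : L * a ^ 3 ≤ L * B ^ 3 := mul_le_mul_of_nonneg_left h1 hL.le
      have h3 : L * B ^ 3 = (L * B) * B ^ 2 := by ring
      have h4 : (L * B) * B ^ 2 ≤ lmin * B ^ 2 := by
        rw [hLB]
        nlinarith [sq_nonneg B, hlmin.le, hν1, hν0.le]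
      linarith
    have : f x - f xstar ≤ lmin * B ^ 2 := by
      nlinarith [K2.2, hbQ, hLa3]
    have he : lmin * B ^ 2 = ν ^ 2 * lmin ^ 3 / L ^ 2 := hBsq
    linarith [this, he.le, he.ge]
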